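/- Let D be an algebraically closed division ring with center F, p either a nonconstant polynomial in F[x] or an element of F⟨X₁,…,Xₘ⟩ with zero constant term and p(F) ≠ {0}, and n ≥ 1. Then every diagonal matrix in Mₙ(D) lies in the image p(Mₙ(D)). -/
import Mathlib

open Polynomial

/-- Scalar case: every element of `D` is a value of a nonconstant central polynomial. -/
theorem aux_scalar_value {D : Type*} [DivisionRing D]
    (hac : ∀ q : Polynomial D, 0 < q.degree → ∃ a : D, q.eval a = 0)
    (p : Polynomial (Subring.center D)) (hp : 0 < p.degree) (d : D) :
    ∃ a : D, Polynomial.aeval a p = d := by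
  set φ := algebraMap (Subring.center D) D with hφdef
  have hφ : Function.Injective φ := (algebraMap (Subring.center D) D).injective
  have hdeg : (p.map φ).degree = p.degree := p.degree_map_eq_of_injective hφ
  have h1 : 0 < (p.map φ - C d).degree := by
    rw [Polynomial.degree_sub_eq_left_of_degree_lt
      (lt_of_le_of_lt (Polynomial.degree_C_le) (hdeg ▸ hp)), hdeg]
    exact hp
  obtain ⟨a, ha⟩ := hac _ h1
  refine ⟨a, ?_⟩
  rw [Polynomial.eval_sub, Polynomial.eval_C, sub_eq_zero] at ha
  rw [Polynomial.aeval_def, ← Polynomial.eval_map, ha]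

theorem aux_key {D : Type*} [DivisionRing D] {m : ℕ} (c : Fin m → Subring.center D)
    (p : FreeAlgebra (Subring.center D) (Fin m))
    {A : Type*} [Ring A] [Algebra (Subring.center D) A] (x : A) :
    Polynomial.aeval x (FreeAlgebra.lift (Subring.center D)
        (fun j => (c j) • (Polynomial.X : Polynomial (Subring.center D))) p)
      = FreeAlgebra.lift (Subring.center D) (fun j => (c j) • x) p := by
  have : (Polynomial.aeval x).comp
      (FreeAlgebra.lift (Subring.center D) (fun j => (c j) • (Polynomial.X : Polynomial (Subring.center D))))
      = FreeAlgebra.lift (Subring.center D) (fun j => (c j) • x) := by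
    apply FreeAlgebra.hom_ext
    funext j
    show Polynomial.aeval x (FreeAlgebra.lift (Subring.center D)
      (fun j => (c j) • (Polynomial.X : Polynomial (Subring.center D))) (FreeAlgebra.ι _ j))
      = FreeAlgebra.lift (Subring.center D) (fun j => (c j) • x) (FreeAlgebra.ι _ j)
    rw [FreeAlgebra.lift_ι_apply, FreeAlgebra.lift_ι_apply, map_smul, Polynomial.aeval_X]
  calc Polynomial.aeval x (FreeAlgebra.lift (Subring.center D)
        (fun j => (c j) • (Polynomial.X : Polynomial (Subring.center D))) p)
      = ((Polynomial.aeval x).comp (FreeAlgebra.lift (Subring.center D)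
          (fun j => (c j) • (Polynomial.X : Polynomial (Subring.center D))))) p := rfl
    _ = _ := by rw [this]

theorem diagonal_mem_image (D : Type*) [DivisionRing D]
    (hac : ∀ q : Polynomial D, 0 < q.degree → ∃ a : D, q.eval a = 0)
    (n : ℕ) (hn : 1 ≤ n) :
    (∀ p : Polynomial (Subring.center D), 0 < p.degree →
      ∀ d : Fin n → D, ∃ B : Matrix (Fin n) (Fin n) D,
        Polynomial.aeval B p = Matrix.diagonal d) ∧
    (∀ m : ℕ, ∀ p : FreeAlgebra (Subring.center D) (Fin m),
      (FreeAlgebra.lift (Subring.center D)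
          (fun _ : Fin m => (0 : Subring.center D))) p = 0 →
      (∃ a : Fin m → Subring.center D,
          (FreeAlgebra.lift (Subring.center D) a) p ≠ 0) →
      ∀ d : Fin n → D, ∃ B : Fin m → Matrix (Fin n) (Fin n) D,
        (FreeAlgebra.lift (Subring.center D) B) p = Matrix.diagonal d) := by
  have part1 : ∀ p : Polynomial (Subring.center D), 0 < p.degree →
      ∀ d : Fin n → D, ∃ B : Matrix (Fin n) (Fin n) D,
        Polynomial.aeval B p = Matrix.diagonal d := by
    intro p hp d
    choose a ha using fun i => aux_scalar_value hac p hp (d i)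
    refine ⟨Matrix.diagonal a, ?_⟩
    have h1 : Polynomial.aeval ((Matrix.diagonalAlgHom (n := Fin n) (α := D) (Subring.center D)) a) p
        = Matrix.diagonalAlgHom (n := Fin n) (α := D) (Subring.center D) (Polynomial.aeval a p) :=
      Polynomial.aeval_algHom_apply _ a p
    simp only [Matrix.diagonalAlgHom_apply] at h1
    rw [h1]
    have had : Polynomial.aeval a p = d := by
      funext i
      have h2 := Polynomial.aeval_algHom_apply (Pi.evalAlgHom (Subring.center D) (fun _ => D) i) a p
      simp only [Pi.evalAlgHom_apply] at h2
      rw [← h2, ha]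
    rw [had]
  refine ⟨part1, ?_⟩
  intro m p hzero ⟨c, hc⟩ d
  -- substitute Xⱼ ↦ cⱼ • X to get a one-variable polynomial
  set q : Polynomial (Subring.center D) :=
    FreeAlgebra.lift (Subring.center D) (fun j => (c j) • (Polynomial.X : Polynomial (Subring.center D))) p with hq
  have key := fun {A : Type _} [Ring A] [Algebra (Subring.center D) A] (x : A) => aux_key c p x
  have hq0 : q.coeff 0 = 0 := by
    have h0 := key (0 : Subring.center D)
    have heq : (fun j => (c j) • (0 : Subring.center D)) = fun _ : Fin m => (0 : Subring.center D) := by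
      funext j; simp
    rw [heq, hzero, ← hq] at h0
    rw [Polynomial.coeff_zero_eq_eval_zero, ← Polynomial.coe_aeval_eq_eval]
    exact h0
  have hqne : q ≠ 0 := by
    intro h
    apply hc
    have h1 := key (1 : Subring.center D)
    have heq : (fun j => (c j) • (1 : Subring.center D)) = c := by funext j; simp
    rw [heq, ← hq, h, map_zero] at h1
    exact h1.symm
  have hqdeg : 0 < q.degree := by
    by_contra h
    push_neg at h
    have := Polynomial.eq_C_of_degree_le_zero h
    rw [hq0, map_zero] at this
    exact hqne this
  obtain ⟨B, hB⟩ := part1 q hqdeg d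
  exact ⟨fun j => (c j) • B, (key B).symm.trans hB⟩
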